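/- For turn-to-bearing motion through angle θ with radius r = R(x,y,θ) = (x sin θ − y cos θ)/(1 − cos θ), if the point (x,y) lies on the straight segment (i.e., the signed distance d from the tangent point to (x,y) is nonnegative), then the total path length satisfies rθ + d = x(cot(θ/2)·θ − 1) + y(cot(θ/2) − (cos θ/(1 − cos θ))·θ). -/

import Mathlib

open Real

/-- Closed-form for the total turn-to-bearing path length: with `r = R(x,y,θ)` and the
point `(x,y)` on the straight segment at (nonnegative) signed distance `d` from the
tangent point, `rθ + d = x(cot(θ/2)θ − 1) + y(cot(θ/2) − (cos θ/(1 − cos θ))θ)`. -/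
theorem path_length_linear_form (x y θ r d : ℝ)
    (h1 : 0 < θ) (h2 : θ < 2 * π) (hs : Real.sin (θ / 2) ≠ 0)
    (hr : r = (x * Real.sin θ - y * Real.cos θ) / (1 - Real.cos θ))
    (hd : 0 ≤ d)
    (hx : x - r * Real.sin θ = d * Real.cos θ)
    (hy : y - r * (1 - Real.cos θ) = d * Real.sin θ) :
    r * θ + d =
      x * ((Real.cos (θ / 2) / Real.sin (θ / 2)) * θ - 1) +
      y * (Real.cos (θ / 2) / Real.sin (θ / 2) -
        (Real.cos θ / (1 - Real.cos θ)) * θ) := by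
  have hxe : x = r * Real.sin θ + d * Real.cos θ := by linarith
  have hye : y = r * (1 - Real.cos θ) + d * Real.sin θ := by linarith
  have hsin : Real.sin θ = 2 * Real.sin (θ/2) * Real.cos (θ/2) := by
    rw [show θ = 2 * (θ/2) by ring, Real.sin_two_mul]; ring
  have hcos : Real.cos θ = 1 - 2 * Real.sin (θ/2)^2 := by
    have := Real.sin_sq_add_cos_sq (θ/2)
    conv_lhs => rw [show θ = 2 * (θ/2) by ring]
    rw [Real.cos_two_mul]; nlinarith [this]
  subst hxe hye
  rw [hsin, hcos]
  field_simp
  linear_combination (-(4 * Real.sin (θ/2)^3 * (r*θ+d))) * Real.sin_sq_add_cos_sq (θ/2)
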